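/- Let R be a d×d reflection nonsingular M-matrix, x ∈ ℝ_+^d with x_i = 0, and α < 0. Consider the driving function X(t) = x + α e_i t on [0,T], and let J ⊆ {1,…,d} with i ∈ J be the set {j : Z_j(0) = 0} (where Z(0) = x). Then on the interval [0, τ] before any new component hits zero, the functions Z(t) and L(t) given by [Z(t)]_J = 0, [Z(t)]_{J^c} = [x]_{J^c} + |α| [R]_{J^c J} [R]_J^{-1} [e_i]_J t, [L(t)]_{J^c} = 0, [L(t)]_J = |α| [R]_J^{-1} [e_i]_J t, satisfy Z(t) = X(t) + R L(t), Z(t) ∈ ℝ_+^d, L is nondecreasing with L(0) = 0, and L_j increases only when Z_j = 0; hence they solve the Skorohod problem on [0, τ]. Moreover Z is nonincreasing and L is nondecreasing on this interval. -/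

import Mathlib

open Set

/-- A reflection nonsingular M-matrix: `R = I - Q` with `Q ≥ 0` entrywise, zero diagonal,
and spectral radius strictly less than `1`. -/
def IsReflMMatrix {n : Type*} [Fintype n] [DecidableEq n] (R : Matrix n n ℝ) : Prop :=
  ∃ Q : Matrix n n ℝ, (∀ i j, 0 ≤ Q i j) ∧ (∀ i, Q i i = 0) ∧
    spectralRadius ℂ (Q.map (algebraMap ℝ ℂ)) < 1 ∧ R = 1 - Q

open Set Filter Topology
open scoped ENNReal NNReal

attribute [local instance] Matrix.linftyOpNormedRing Matrix.linftyOpNormedAlgebra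
  Matrix.linftyOpNormedAddCommGroup

lemma core {d : ℕ} (Q : Matrix (Fin d) (Fin d) ℝ) (hQ : ∀ i j, 0 ≤ Q i j)
    (w : Fin d → ℝ) (hw0 : ∀ j, 0 ≤ w j) (j0 : Fin d) (hj0 : 0 < w j0)
    (hw : ∀ j, w j ≤ Q.mulVec w j) :
    1 ≤ spectralRadius ℂ (Q.map (algebraMap ℝ ℂ)) := by
  -- powers are entrywise nonneg
  have hpow : ∀ n : ℕ, ∀ i j, 0 ≤ (Q ^ n) i j := by
    intro n
    induction n with
    | zero => intro i j; simp [Matrix.one_apply]; positivity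
    | succ n ih =>
      intro i j
      rw [pow_succ, Matrix.mul_apply]
      exact Finset.sum_nonneg fun k _ => mul_nonneg (ih i k) (hQ k j)
  -- iterate the subinvariance
  have hiter : ∀ n : ℕ, ∀ j, w j ≤ ((Q ^ n).mulVec w) j := by
    intro n
    induction n with
    | zero => intro j; simp [Matrix.one_mulVec]
    | succ n ih =>
      intro j
      have : ((Q ^ (n+1)).mulVec w) j = (Q.mulVec ((Q ^ n).mulVec w)) j := by
        rw [Matrix.mulVec_mulVec, ← pow_succ']
      rw [this]
      refine le_trans (hw j) ?_
      simp only [Matrix.mulVec, dotProduct]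
      exact Finset.sum_le_sum fun k _ => mul_le_mul_of_nonneg_left (ih k) (hQ j k)
  set S : ℝ := ∑ j, w j with hS
  have hSpos : 0 < S := lt_of_lt_of_le hj0 (Finset.single_le_sum (fun j _ => hw0 j) (Finset.mem_univ j0))
  set c : ℝ := w j0 / S with hc
  have hcpos : 0 < c := div_pos hj0 hSpos
  -- row sum lower bound
  have hrow : ∀ n : ℕ, c ≤ ∑ j, (Q ^ n) j0 j := by
    intro n
    rw [hc, div_le_iff₀ hSpos]
    calc w j0 ≤ ((Q ^ n).mulVec w) j0 := hiter n j0
      _ = ∑ j, (Q ^ n) j0 j * w j := rfl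
      _ ≤ ∑ j, (Q ^ n) j0 j * S := Finset.sum_le_sum fun j _ =>
          mul_le_mul_of_nonneg_left (Finset.single_le_sum (fun k _ => hw0 k) (Finset.mem_univ j)) (hpow n j0 j)
      _ = (∑ j, (Q ^ n) j0 j) * S := by rw [Finset.sum_mul]
  -- norm lower bound
  have hnorm : ∀ n : ℕ, ENNReal.ofReal c ≤ (‖(Q.map (algebraMap ℝ ℂ)) ^ n‖₊ : ℝ≥0∞) := by
    intro n
    have hmp : (Q.map (algebraMap ℝ ℂ)) ^ n = (Q ^ n).map (algebraMap ℝ ℂ) := by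
      have := map_pow ((algebraMap ℝ ℂ).mapMatrix) Q n
      simpa [RingHom.mapMatrix_apply] using this.symm
    rw [hmp, ← enorm_eq_nnnorm, ← ofReal_norm]
    refine ENNReal.ofReal_le_ofReal ?_
    have h1 : c ≤ ((∑ j, ‖((Q ^ n).map (algebraMap ℝ ℂ)) j0 j‖₊ : ℝ≥0) : ℝ) := by
      push_cast
      refine le_trans (hrow n) (Finset.sum_le_sum fun j _ => ?_)
      simp only [Matrix.map_apply]
      exact le_trans (le_abs_self _) (by simp)
    refine le_trans h1 ?_
    rw [Matrix.linfty_opNorm_def]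
    have := Finset.le_sup (f := fun i => ∑ j, ‖((Q ^ n).map (algebraMap ℝ ℂ)) i j‖₊)
      (Finset.mem_univ j0)
    exact_mod_cast this
  -- Gelfand
  by_contra hlt
  push_neg at hlt
  set a := Q.map (algebraMap ℝ ℂ)
  have hT := spectrum.pow_nnnorm_pow_one_div_tendsto_nhds_spectralRadius a
  obtain ⟨r, hρr, hr1⟩ := exists_between hlt
  have hev : ∀ᶠ n : ℕ in atTop, (‖a ^ n‖₊ : ℝ≥0∞) ^ (1 / (n:ℝ)) < r :=
    hT.eventually_lt_const hρr
  have hev2 : ∀ᶠ n : ℕ in atTop, (‖a ^ n‖₊ : ℝ≥0∞) ≤ r ^ n := by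
    filter_upwards [hev, eventually_ge_atTop 1] with n hn hn1
    have hne : (n : ℝ) ≠ 0 := Nat.cast_ne_zero.mpr (by omega)
    have := ENNReal.rpow_le_rpow hn.le (by positivity : (0:ℝ) ≤ (n:ℝ))
    rwa [← ENNReal.rpow_mul, one_div_mul_cancel hne, ENNReal.rpow_one,
      ENNReal.rpow_natCast] at this
  have hr0 : Tendsto (fun n : ℕ => r ^ n) atTop (𝓝 0) :=
    ENNReal.tendsto_pow_atTop_nhds_zero_of_lt_one hr1
  have hev3 : ∀ᶠ n : ℕ in atTop, r ^ n < ENNReal.ofReal c :=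
    hr0.eventually_lt_const (by simpa using ENNReal.ofReal_pos.mpr hcpos)
  obtain ⟨n, h1, h2⟩ := (hev2.and hev3).exists
  exact absurd (le_trans (hnorm n) h1) (not_le.mpr h2)

lemma sum_subtype_eq {d : ℕ} (p : Fin d → Prop) [DecidablePred p] (g : Fin d → ℝ) :
    ∑ k : Subtype p, g k.val = ∑ k : Fin d, if p k then g k else 0 := by
  rw [← Finset.sum_filter]
  exact (Finset.sum_subtype _ (by simp) g).symm

lemma sub_inv {d : ℕ} (Q : Matrix (Fin d) (Fin d) ℝ) (hQ : ∀ i j, 0 ≤ Q i j)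
    (hρ : spectralRadius ℂ (Q.map (algebraMap ℝ ℂ)) < 1)
    (p : Fin d → Prop) [DecidablePred p] :
    IsUnit ((1 : Matrix (Subtype p) (Subtype p) ℝ)
      - Q.submatrix (Subtype.val) (Subtype.val)).det := by
  set P := (1 : Matrix (Subtype p) (Subtype p) ℝ) - Q.submatrix (Subtype.val) (Subtype.val)
    with hP
  rw [isUnit_iff_ne_zero]
  intro hdet
  obtain ⟨u, hu0, hu⟩ := (Matrix.exists_mulVec_eq_zero_iff).mpr hdet
  have huQ : ∀ j : Subtype p, u j = (Q.submatrix Subtype.val Subtype.val).mulVec u j := by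
    intro j
    have := congrFun hu j
    rw [hP, Matrix.sub_mulVec, Matrix.one_mulVec] at this
    have := sub_eq_zero.mp this
    exact this
  set w : Fin d → ℝ := fun j => if h : p j then |u ⟨j, h⟩| else 0 with hwdef
  have hw0 : ∀ j, 0 ≤ w j := by
    intro j; rw [hwdef]; dsimp only; split <;> [exact abs_nonneg _; exact le_rfl]
  obtain ⟨k0, hk0⟩ := Function.ne_iff.mp hu0
  have hj0 : 0 < w k0.val := by
    rw [hwdef]; dsimp only
    rw [dif_pos k0.2]
    simpa using abs_pos.mpr hk0
  have hw : ∀ j, w j ≤ Q.mulVec w j := by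
    intro j
    have hmv : 0 ≤ Q.mulVec w j := by
      simp only [Matrix.mulVec, dotProduct]
      exact Finset.sum_nonneg fun k _ => mul_nonneg (hQ j k) (hw0 k)
    rw [hwdef]; dsimp only
    split
    · rename_i h
      rw [huQ ⟨j, h⟩]
      simp only [Matrix.mulVec, dotProduct, Matrix.submatrix_apply]
      calc |∑ k : Subtype p, Q j k.val * u k|
          ≤ ∑ k : Subtype p, |Q j k.val * u k| := Finset.abs_sum_le_sum_abs _ _
        _ = ∑ k : Subtype p, Q j k.val * w k.val := by
            refine Finset.sum_congr rfl fun k _ => ?_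
            rw [abs_mul, abs_of_nonneg (hQ j k.val), hwdef]
            dsimp only
            rw [dif_pos k.2]
        _ = ∑ k : Fin d, if p k then Q j k * w k else 0 :=
            sum_subtype_eq p (fun k => Q j k * w k)
        _ ≤ ∑ k : Fin d, Q j k * w k := by
            refine Finset.sum_le_sum fun k _ => ?_
            split
            · exact le_refl _
            · exact mul_nonneg (hQ j k) (hw0 k)
        _ = ∑ k : Fin d, Q j k * w k := rfl
    · exact hmv
  exact absurd (core Q hQ w hw0 k0.val hj0 hw) (not_le.mpr hρ)

lemma sub_nonneg_inv {d : ℕ} (Q : Matrix (Fin d) (Fin d) ℝ) (hQ : ∀ i j, 0 ≤ Q i j)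
    (hρ : spectralRadius ℂ (Q.map (algebraMap ℝ ℂ)) < 1)
    (p : Fin d → Prop) [DecidablePred p]
    (e v : Subtype p → ℝ) (he : ∀ k, 0 ≤ e k)
    (hv : ((1 : Matrix (Subtype p) (Subtype p) ℝ)
      - Q.submatrix (Subtype.val) (Subtype.val)).mulVec v = e) :
    ∀ k, 0 ≤ v k := by
  by_contra hneg
  push_neg at hneg
  obtain ⟨k0, hk0⟩ := hneg
  set w : Fin d → ℝ := fun j => if h : p j then max (-(v ⟨j, h⟩)) 0 else 0 with hwdef
  have hw0 : ∀ j, 0 ≤ w j := by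
    intro j; rw [hwdef]; dsimp only; split <;> [exact le_max_right _ _; exact le_rfl]
  have hj0 : 0 < w k0.val := by
    rw [hwdef]; dsimp only
    rw [dif_pos k0.2]
    simp only [Subtype.coe_eta]
    rw [max_eq_left (by linarith)]
    linarith
  have hw : ∀ j, w j ≤ Q.mulVec w j := by
    intro j
    have hmv : 0 ≤ Q.mulVec w j := by
      simp only [Matrix.mulVec, dotProduct]
      exact Finset.sum_nonneg fun k _ => mul_nonneg (hQ j k) (hw0 k)
    rw [hwdef]; dsimp only
    split
    · rename_i h
      refine max_le ?_ hmv
      have hj := congrFun hv ⟨j, h⟩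
      rw [Matrix.sub_mulVec, Matrix.one_mulVec] at hj
      have h1 : -(v ⟨j, h⟩) ≤ ∑ k : Subtype p, Q j k.val * (-(v k)) := by
        have h2 : v ⟨j, h⟩ - ∑ k : Subtype p, Q j k.val * v k = e ⟨j, h⟩ := hj
        have h3 : 0 ≤ e ⟨j, h⟩ := he _
        have h4 : ∑ k : Subtype p, Q j k.val * (-(v k))
            = -(∑ k : Subtype p, Q j k.val * v k) := by
          rw [← Finset.sum_neg_distrib]
          exact Finset.sum_congr rfl fun k _ => by ring
        rw [h4]
        linarith
      refine le_trans h1 ?_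
      calc ∑ k : Subtype p, Q j k.val * (-(v k))
          ≤ ∑ k : Subtype p, Q j k.val * w k.val := by
            refine Finset.sum_le_sum fun k _ => ?_
            refine mul_le_mul_of_nonneg_left ?_ (hQ j k.val)
            rw [hwdef]; dsimp only
            rw [dif_pos k.2]
            simp only [Subtype.coe_eta]
            exact le_max_left _ _
        _ = ∑ k : Fin d, if p k then Q j k * w k else 0 :=
            sum_subtype_eq p (fun k => Q j k * w k)
        _ ≤ ∑ k : Fin d, Q j k * w k := by
            refine Finset.sum_le_sum fun k _ => ?_
            split
            · exact le_refl _
            · exact mul_nonneg (hQ j k) (hw0 k)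
        _ = ∑ k : Fin d, Q j k * w k := rfl
    · exact hmv
  exact absurd (core Q hQ w hw0 k0.val hj0 hw) (not_le.mpr hρ)

/-- Explicit solution of the Skorohod problem for the linear driving function
`X(t) = x + α e_i t` with `α < 0`, `x ∈ ℝ_+^d`, `x_i = 0`: with `J = {j : x_j = 0}`,
`v = [R]_J⁻¹ [e_i]_J`, the functions `[Z]_J = 0`,
`[Z]_{J^c}(t) = [x]_{J^c} + |α| [R]_{J^c J} v t`, `[L]_J(t) = |α| v t`, `[L]_{J^c} = 0`
solve the Skorohod problem on `[0, τ]` (before any new component hits zero); moreover `Z`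
is nonincreasing and `L` is nondecreasing there. -/
theorem stmt15 {d : ℕ} (R : Matrix (Fin d) (Fin d) ℝ) (hR : IsReflMMatrix R)
    (x : Fin d → ℝ) (hx : ∀ j, 0 ≤ x j) (i : Fin d) (hxi : x i = 0)
    (α : ℝ) (hα : α < 0) (τ : ℝ) (hτ : 0 ≤ τ)
    (v : {j // x j = 0} → ℝ)
    (hv : v = ((R.submatrix (Subtype.val : {j : Fin d // x j = 0} → Fin d)
        (Subtype.val : {j : Fin d // x j = 0} → Fin d))⁻¹).mulVec
      (fun j : {j : Fin d // x j = 0} => if (j : Fin d) = i then (1 : ℝ) else 0))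
    (Z L : ℝ → Fin d → ℝ)
    (hZ : Z = fun t j => if h : x j = 0 then 0
      else x j + |α| * (∑ k : {j : Fin d // x j = 0}, R j (k : Fin d) * v k) * t)
    (hL : L = fun t j => if h : x j = 0 then |α| * v ⟨j, h⟩ * t else 0)
    (hpos : ∀ t ∈ Ico (0 : ℝ) τ, ∀ j, x j ≠ 0 → 0 < Z t j) :
    (∀ t ∈ Icc (0 : ℝ) τ, ∀ j,
      Z t j = (x j + α * t * (if j = i then 1 else 0)) + ∑ k, R j k * L t k) ∧
    (∀ t ∈ Icc (0 : ℝ) τ, ∀ j, 0 ≤ Z t j) ∧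
    (∀ j, L 0 j = 0) ∧
    (∀ j, MonotoneOn (fun t => L t j) (Icc 0 τ)) ∧
    (∀ j, ∀ s t : ℝ, 0 ≤ s → s ≤ t → t ≤ τ →
      (∀ u ∈ Icc s t, Z u j ≠ 0) → L t j = L s j) ∧
    (∀ j, AntitoneOn (fun t => Z t j) (Icc 0 τ)) := by
  obtain ⟨Q, hQnn, hQdiag, hρ, hRQ⟩ := hR
  have habs : |α| = -α := abs_of_neg hα
  set P := R.submatrix (Subtype.val : {j : Fin d // x j = 0} → Fin d)
    (Subtype.val : {j : Fin d // x j = 0} → Fin d) with hPdef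
  have hPform : P = (1 : Matrix {j : Fin d // x j = 0} {j : Fin d // x j = 0} ℝ)
      - Q.submatrix Subtype.val Subtype.val := by
    ext a b
    simp only [hPdef, hRQ, Matrix.submatrix_apply, Matrix.sub_apply, Matrix.one_apply]
    congr 1
    simp [Subtype.val_inj]
  have hdet : IsUnit P.det := by
    rw [hPform]
    exact sub_inv Q hQnn hρ (fun j => x j = 0)
  set e : {j : Fin d // x j = 0} → ℝ :=
    fun j => if (j : Fin d) = i then (1 : ℝ) else 0 with he
  have hPv : P.mulVec v = e := by
    rw [hv, Matrix.mulVec_mulVec, Matrix.mul_nonsing_inv P hdet, Matrix.one_mulVec]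
  have hvnn : ∀ k, 0 ≤ v k := by
    refine sub_nonneg_inv Q hQnn hρ (fun j => x j = 0) e v
      (fun k => by rw [he]; dsimp only; split <;> norm_num) ?_
    rw [← hPform]
    exact hPv
  set s : Fin d → ℝ := fun j => ∑ k : {j : Fin d // x j = 0}, R j (k : Fin d) * v k with hs
  have hsapp : ∀ j : Fin d,
      (∑ k : {j : Fin d // x j = 0}, R j (k : Fin d) * v k) = s j := fun _ => rfl
  have hsJ : ∀ (j : Fin d) (h : x j = 0), s j = (if j = i then 1 else 0) := by
    intro j h
    have h2 := congrFun hPv ⟨j, h⟩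
    simp only [Matrix.mulVec, dotProduct, hPdef, Matrix.submatrix_apply, he] at h2
    rw [← hsapp]
    exact h2
  have hsnpos : ∀ j : Fin d, x j ≠ 0 → s j ≤ 0 := by
    intro j hj
    rw [← hsapp]
    refine Finset.sum_nonpos fun k _ => ?_
    have hjk : j ≠ (k : Fin d) := fun hh => hj (hh ▸ k.2)
    have hRjk : R j (k : Fin d) ≤ 0 := by
      rw [hRQ, Matrix.sub_apply, Matrix.one_apply_ne hjk]
      simpa using hQnn j k
    exact mul_nonpos_of_nonpos_of_nonneg hRjk (hvnn k)
  have hLsum : ∀ (t : ℝ) (j : Fin d), ∑ k, R j k * L t k = |α| * s j * t := by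
    intro t j
    have h1 : ∀ k : Fin d, R j k * L t k
        = if x k = 0 then R j k * L t k else 0 := by
      intro k
      split
      · rfl
      · rename_i hk
        simp only [hL]
        simp [hk]
    calc ∑ k, R j k * L t k = ∑ k : Fin d, if x k = 0 then R j k * L t k else 0 :=
          Finset.sum_congr rfl fun k _ => h1 k
      _ = ∑ k : {j : Fin d // x j = 0}, R j (k : Fin d) * L t (k : Fin d) :=
          (sum_subtype_eq (fun j => x j = 0) (fun k => R j k * L t k)).symm
      _ = ∑ k : {j : Fin d // x j = 0}, R j (k : Fin d) * (|α| * v k * t) := by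
          refine Finset.sum_congr rfl fun k _ => ?_
          simp only [hL]
          simp only [dif_pos k.2, Subtype.coe_eta]
      _ = |α| * s j * t := by
          rw [← hsapp, Finset.mul_sum, Finset.sum_mul]
          exact Finset.sum_congr rfl fun k _ => by ring
  refine ⟨?_, ?_, ?_, ?_, ?_, ?_⟩
  · -- Z = X + R L
    intro t ht j
    rw [hLsum t j]
    simp only [hZ]
    by_cases hj : x j = 0
    · rw [dif_pos hj, hsJ j hj, hj, habs]
      split_ifs <;> ring
    · rw [dif_neg hj]
      have hji : j ≠ i := fun hh => hj (hh ▸ hxi)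
      rw [if_neg hji, hsapp]
      ring
  · -- nonnegativity of Z
    intro t ht j
    simp only [hZ]
    by_cases hj : x j = 0
    · rw [dif_pos hj]
    · rw [dif_neg hj, hsapp]
      rcases lt_or_eq_of_le ht.2 with hlt | heq
      · have h3 := hpos t ⟨ht.1, hlt⟩ j hj
        simp only [hZ] at h3
        rw [dif_neg hj, hsapp] at h3
        exact h3.le
      · subst heq
        by_contra hcon
        push_neg at hcon
        set C : ℝ := |α| * s j with hC
        have hxj : 0 < x j := lt_of_le_of_ne (hx j) (Ne.symm hj)
        have hCneg : C < 0 := by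
          by_contra hC0
          push_neg at hC0
          nlinarith [ht.1]
        have hCne : C ≠ 0 := ne_of_lt hCneg
        set t0 : ℝ := x j / (-C) with ht0
        have ht0nn : 0 ≤ t0 := div_nonneg hxj.le (by linarith)
        have ht0lt : t0 < t := by
          rw [ht0, div_lt_iff₀ (by linarith : (0:ℝ) < -C)]
          nlinarith
        have h4 := hpos t0 ⟨ht0nn, lt_of_lt_of_le ht0lt ht.2⟩ j hj
        simp only [hZ] at h4
        rw [dif_neg hj, hsapp, ← hC] at h4
        have hCval : C * t0 = -(x j) := by
          have h5 : (-C) * t0 = x j := by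
            rw [ht0]
            exact mul_div_cancel₀ (x j) (neg_ne_zero.mpr hCne)
          linarith
        nlinarith
  · -- L 0 = 0
    intro j
    simp only [hL]
    split <;> simp
  · -- L monotone
    intro j a ha b hb hab
    simp only [hL]
    by_cases hj : x j = 0
    · simp only [dif_pos hj]
      exact mul_le_mul_of_nonneg_left hab (mul_nonneg (abs_nonneg α) (hvnn ⟨j, hj⟩))
    · simp only [dif_neg hj]
      exact le_rfl
  · -- L flat when Z ≠ 0
    intro j s' t hs' hst htτ hne
    by_cases hj : x j = 0
    · exfalso
      refine hne s' ⟨le_rfl, hst⟩ ?_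
      simp only [hZ]
      exact dif_pos hj
    · simp only [hL]
      simp [hj]
  · -- Z antitone
    intro j a ha b hb hab
    simp only [hZ]
    by_cases hj : x j = 0
    · simp only [dif_pos hj]
      exact le_rfl
    · simp only [dif_neg hj]
      rw [hsapp]
      have hC : |α| * s j ≤ 0 := mul_nonpos_of_nonneg_of_nonpos (abs_nonneg α) (hsnpos j hj)
      nlinarith [mul_le_mul_of_nonpos_left hab hC]
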